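/- Let M, M' be matroids of the same rank on the same ground set E with M ⪯ M' in the weak order (every basis of M is a basis of M'). Then with respect to any fixed linear order on E, every nbc-basis of M is an nbc-basis of M'; consequently nbc(M) ≤ nbc(M'). -/

import Mathlib

open Matroid

/-- A circuit of a matroid: a minimal dependent set. -/
def IsCircuit {α : Type*} (M : Matroid α) (C : Set α) : Prop :=
  M.Dep C ∧ ∀ D : Set α, D ⊂ C → ¬ M.Dep D

/-- A broken circuit: a circuit with its minimum element (in the fixed linear order)
removed. -/
def IsBrokenCircuit {α : Type*} [LinearOrder α] (M : Matroid α) (D : Set α) : Prop :=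
  ∃ C : Set α, ∃ m : α, _root_.IsCircuit M C ∧ m ∈ C ∧ (∀ x ∈ C, m ≤ x) ∧ D = C \ {m}

/-- An nbc-basis: a basis containing no broken circuit. -/
def IsNbcBase {α : Type*} [LinearOrder α] (M : Matroid α) (B : Set α) : Prop :=
  M.IsBase B ∧ ∀ D : Set α, IsBrokenCircuit M D → ¬ D ⊆ B

/-- Every finite dependent set contains a circuit. -/
lemma exists_circuit_subset {α : Type*} (M : Matroid α) :
    ∀ n : ℕ, ∀ X : Set α, X.Finite → X.ncard ≤ n → M.Dep X →
      ∃ C ⊆ X, _root_.IsCircuit M C := by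
  intro n
  induction n with
  | zero =>
    intro X hXf hXn hXd
    exfalso
    rw [Nat.le_zero, Set.ncard_eq_zero hXf] at hXn
    subst hXn
    exact hXd.not_indep M.empty_indep
  | succ n ih =>
    intro X hXf hXn hXd
    by_cases h : ∀ D : Set α, D ⊂ X → ¬ M.Dep D
    · exact ⟨X, subset_rfl, hXd, h⟩
    · push_neg at h
      obtain ⟨D, hDX, hDd⟩ := h
      have hDf : D.Finite := hXf.subset hDX.subset
      have : D.ncard ≤ n := by
        have := Set.ncard_lt_ncard hDX hXf
        omega
      obtain ⟨C, hCD, hC⟩ := ih D hDf this hDd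
      exact ⟨C, hCD.trans hDX.subset, hC⟩

/-- If `M ⪯ M'` in the weak order (same ground set, same rank, every basis of `M` a
basis of `M'`), then every nbc-basis of `M` is an nbc-basis of `M'`; hence
`nbc(M) ≤ nbc(M')`. -/
theorem nbc_mono_weak_order {α : Type*} [LinearOrder α] (M M' : Matroid α)
    (hE : M.E = M'.E) (hfin : M'.E.Finite)
    (hrank : ∀ B B' : Set α, M.IsBase B → M'.IsBase B' → B.ncard = B'.ncard)
    (hweak : ∀ B : Set α, M.IsBase B → M'.IsBase B) :
    (∀ B : Set α, IsNbcBase M B → IsNbcBase M' B) ∧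
      {B : Set α | IsNbcBase M B}.ncard ≤ {B : Set α | IsNbcBase M' B}.ncard := by
  -- independence transfers from M to M'
  have hindep : ∀ I : Set α, M.Indep I → M'.Indep I := by
    intro I hI
    obtain ⟨B, hB, hIB⟩ := Matroid.indep_iff.1 hI
    exact Matroid.indep_iff.2 ⟨B, hweak B hB, hIB⟩
  have hdep : ∀ D : Set α, M'.Dep D → M.Dep D := by
    intro D hD
    rw [Matroid.dep_iff] at hD ⊢
    exact ⟨fun hI => hD.1 (hindep D hI), hE ▸ hD.2⟩
  have hmain : ∀ B : Set α, IsNbcBase M B → IsNbcBase M' B := by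
    rintro B ⟨hB, hnbc⟩
    refine ⟨hweak B hB, ?_⟩
    rintro D ⟨C', m', ⟨hC'dep, hC'min⟩, hm'C', hm'min, rfl⟩ hDB
    -- C' is dependent in M, so it contains a circuit C of M
    have hC'E : C' ⊆ M'.E := hC'dep.subset_ground
    have hC'f : C'.Finite := hfin.subset hC'E
    obtain ⟨C, hCC', hC⟩ :=
      exists_circuit_subset M C'.ncard C' hC'f le_rfl (hdep C' hC'dep)
    -- m' ∈ C, else C ⊆ B contradicts B independent
    have hm'C : m' ∈ C := by
      by_contra hm'
      have hCB : C ⊆ B := fun x hx =>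
        hDB ⟨hCC' hx, fun h => hm' (h ▸ hx)⟩
      exact hC.1.not_indep (hB.indep.subset hCB)
    exact hnbc (C \ {m'})
      ⟨C, m', hC, hm'C, fun x hx => hm'min x (hCC' hx), rfl⟩
      (fun x hx => hDB ⟨hCC' hx.1, hx.2⟩)
  refine ⟨hmain, Set.ncard_le_ncard (fun B hB => hmain B hB) ?_⟩
  exact hfin.finite_subsets.subset (fun B hB => hB.1.subset_ground)
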